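/- Let P be an n×n row-stochastic real matrix and φ ∈ ℝⁿ a strictly positive vector with φᵀ P = φᵀ and 𝟙ᵀ φ = 1. Let Φ = diag(φ) and define L := I − (1/2)(Φ^{1/2} P Φ^{−1/2} + Φ^{−1/2} Pᵀ Φ^{1/2}). Then L is symmetric, and for every f ∈ ℝⁿ, writing g := Φ^{−1/2} f, one has fᵀ L f = (1/2) ∑_{i,j} φᵢ P_{ij} (gᵢ − gⱼ)². In particular L is positive semidefinite. -/

import Mathlib

open Matrix

/-- The BoP Laplacian `L = I - ½(Φ^{1/2} P Φ^{-1/2} + Φ^{-1/2} Pᵀ Φ^{1/2})`,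
where `Φ = diag(φ)`. -/
noncomputable def bopLaplacian {n : ℕ} (P : Matrix (Fin n) (Fin n) ℝ)
    (φ : Fin n → ℝ) : Matrix (Fin n) (Fin n) ℝ :=
  1 - (1 / 2 : ℝ) •
    (Matrix.diagonal (fun i => Real.sqrt (φ i)) * P *
        Matrix.diagonal (fun i => (Real.sqrt (φ i))⁻¹) +
      Matrix.diagonal (fun i => (Real.sqrt (φ i))⁻¹) * Pᵀ *
        Matrix.diagonal (fun i => Real.sqrt (φ i)))

/-- **exact Dirichlet-form identity.** Let `P` be row-stochastic with
stationary distribution `φ > 0`.  Then the BoP Laplacian `L` is symmetric, its quadratic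
form satisfies `fᵀ L f = ½ ∑_{i,j} φᵢ P_{ij} (gᵢ - gⱼ)²` where `g = Φ^{-1/2} f`, and in
particular `L` is positive semidefinite. -/
theorem stmt12 {n : ℕ} (P : Matrix (Fin n) (Fin n) ℝ)
    (hP : ∀ i j, 0 ≤ P i j) (hrow : ∀ i, ∑ j, P i j = 1)
    (φ : Fin n → ℝ) (hφ : ∀ i, 0 < φ i)
    (hstat : φ ᵥ* P = φ) (hφsum : ∑ i, φ i = 1) :
    (bopLaplacian P φ).IsSymm ∧
    (∀ f : Fin n → ℝ,
      f ⬝ᵥ (bopLaplacian P φ *ᵥ f) =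
        (1 / 2) * ∑ i, ∑ j, φ i * P i j *
          (((Matrix.diagonal (fun k => (Real.sqrt (φ k))⁻¹) *ᵥ f) i -
            (Matrix.diagonal (fun k => (Real.sqrt (φ k))⁻¹) *ᵥ f) j) ^ 2)) ∧
    (bopLaplacian P φ).PosSemidef := by
  set s : Fin n → ℝ := fun i => Real.sqrt (φ i) with hs
  have hspos : ∀ i, 0 < s i := fun i => Real.sqrt_pos.2 (hφ i)
  have hsne : ∀ i, s i ≠ 0 := fun i => (hspos i).ne'
  have hs2 : ∀ i, s i * s i = φ i := fun i => Real.mul_self_sqrt (hφ i).le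
  have hstat' : ∀ j, (∑ i, φ i * P i j) = φ j := by
    intro j
    have := congrFun hstat j
    simpa [Matrix.vecMul, dotProduct] using this
  -- Symmetry
  have hsymm : (bopLaplacian P φ).IsSymm := by
    unfold Matrix.IsSymm bopLaplacian
    rw [Matrix.transpose_sub, Matrix.transpose_smul, Matrix.transpose_add,
      Matrix.transpose_mul, Matrix.transpose_mul, Matrix.transpose_mul, Matrix.transpose_mul,
      Matrix.diagonal_transpose, Matrix.diagonal_transpose, Matrix.transpose_transpose,
      Matrix.transpose_one]
    rw [add_comm]
    simp only [Matrix.mul_assoc]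
  -- Entrywise formula for the Laplacian
  have hL : ∀ i j, bopLaplacian P φ i j =
      (if i = j then (1 : ℝ) else 0)
        - (1 / 2) * (s i * P i j * (s j)⁻¹ + (s i)⁻¹ * P j i * s j) := by
    intro i j
    simp [bopLaplacian, Matrix.sub_apply, Matrix.add_apply, Matrix.smul_apply,
      Matrix.mul_assoc, Matrix.diagonal_mul, Matrix.mul_diagonal, Matrix.transpose_apply,
      Matrix.one_apply, smul_eq_mul, mul_assoc]
    simp only [hs]
    ring
  -- Main Dirichlet identity
  have main : ∀ f : Fin n → ℝ,
      f ⬝ᵥ (bopLaplacian P φ *ᵥ f) =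
        (1 / 2) * ∑ i, ∑ j, φ i * P i j *
          (((Matrix.diagonal (fun k => (Real.sqrt (φ k))⁻¹) *ᵥ f) i -
            (Matrix.diagonal (fun k => (Real.sqrt (φ k))⁻¹) *ᵥ f) j) ^ 2) := by
    intro f
    set g : Fin n → ℝ := fun i => (s i)⁻¹ * f i with hg
    have hgv : (Matrix.diagonal (fun k => (Real.sqrt (φ k))⁻¹) *ᵥ f) = g := by
      ext i; simp [Matrix.mulVec_diagonal, hg, mul_comm]; exact Or.inl rfl
    -- per-term identity for the left side
    have key_term : ∀ i j, f i * (bopLaplacian P φ i j * f j) =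
        (if i = j then φ i * g i ^ 2 else 0)
          - ((1 / 2) * (φ i * P i j * (g i * g j))
            + (1 / 2) * (φ j * P j i * (g j * g i))) := by
      intro i j
      rw [hL i j, hg]
      by_cases h : i = j
      · subst h
        simp only [if_pos rfl]
        rw [← hs2 i]
        field_simp [hsne i]
        rw [if_pos trivial, if_pos trivial]
        ring
      · simp only [if_neg h]
        rw [← hs2 i, ← hs2 j]
        field_simp [hsne i, hsne j]
        ring
    have lhs_eq : f ⬝ᵥ (bopLaplacian P φ *ᵥ f) =
        (∑ i, φ i * g i ^ 2) - ∑ i, ∑ j, φ i * P i j * (g i * g j) := by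
      have e1 : f ⬝ᵥ (bopLaplacian P φ *ᵥ f)
          = ∑ i, ∑ j, f i * (bopLaplacian P φ i j * f j) := by
        simp [dotProduct, Matrix.mulVec, Finset.mul_sum]
      rw [e1,
        Finset.sum_congr rfl fun i _ => Finset.sum_congr rfl fun j _ => key_term i j]
      simp only [Finset.sum_sub_distrib, Finset.sum_add_distrib]
      have h1 : (∑ i, ∑ j, if i = j then φ i * g i ^ 2 else 0) = ∑ i, φ i * g i ^ 2 := by
        simp
      have h2 : (∑ i, ∑ j, (1 / 2 : ℝ) * (φ j * P j i * (g j * g i)))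
          = ∑ i, ∑ j, (1 / 2 : ℝ) * (φ i * P i j * (g i * g j)) := Finset.sum_comm
      rw [h1, h2]
      have h3 : (∑ i, ∑ j, (1 / 2 : ℝ) * (φ i * P i j * (g i * g j)))
          = (1 / 2) * ∑ i, ∑ j, φ i * P i j * (g i * g j) := by
        simp [Finset.mul_sum]
      rw [h3]; ring
    have rhs_eq : (1 / 2 : ℝ) * (∑ i, ∑ j, φ i * P i j * ((g i - g j) ^ 2)) =
        (∑ i, φ i * g i ^ 2) - ∑ i, ∑ j, φ i * P i j * (g i * g j) := by
      have expand : ∀ i j, φ i * P i j * ((g i - g j) ^ 2) =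
          (φ i * P i j * g i ^ 2 + φ i * P i j * g j ^ 2)
            - 2 * (φ i * P i j * (g i * g j)) := fun i j => by ring
      rw [Finset.sum_congr rfl fun i _ => Finset.sum_congr rfl fun j _ => expand i j]
      simp only [Finset.sum_sub_distrib, Finset.sum_add_distrib]
      have S1 : (∑ i, ∑ j, φ i * P i j * g i ^ 2) = ∑ i, φ i * g i ^ 2 := by
        refine Finset.sum_congr rfl fun i _ => ?_
        calc ∑ j, φ i * P i j * g i ^ 2 = ∑ j, (φ i * g i ^ 2) * P i j :=
              Finset.sum_congr rfl fun j _ => by ring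
          _ = (φ i * g i ^ 2) * ∑ j, P i j := by rw [Finset.mul_sum]
          _ = φ i * g i ^ 2 := by rw [hrow i, mul_one]
      have S2 : (∑ i, ∑ j, φ i * P i j * g j ^ 2) = ∑ i, φ i * g i ^ 2 := by
        rw [Finset.sum_comm]
        refine Finset.sum_congr rfl fun j _ => ?_
        calc ∑ i, φ i * P i j * g j ^ 2 = (∑ i, φ i * P i j) * g j ^ 2 := by
              rw [Finset.sum_mul]
          _ = φ j * g j ^ 2 := by rw [hstat' j]
      have S3 : (∑ i, ∑ j, 2 * (φ i * P i j * (g i * g j)))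
          = 2 * ∑ i, ∑ j, φ i * P i j * (g i * g j) := by
        simp [Finset.mul_sum]
      rw [S1, S2, S3]; ring
    rw [hgv, lhs_eq, rhs_eq]
  -- Positive semidefiniteness
  have hpsd : (bopLaplacian P φ).PosSemidef := by
    refine Matrix.posSemidef_iff_dotProduct_mulVec.2 ⟨hsymm, fun x => ?_⟩
    have hmx := main x
    simp only [star_trivial]
    rw [hmx]
    have : ∀ i ∈ Finset.univ, (0:ℝ) ≤ ∑ j, φ i * P i j *
        (((Matrix.diagonal (fun k => (Real.sqrt (φ k))⁻¹) *ᵥ x) i -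
          (Matrix.diagonal (fun k => (Real.sqrt (φ k))⁻¹) *ᵥ x) j) ^ 2) := by
      intro i _
      exact Finset.sum_nonneg fun j _ =>
        mul_nonneg (mul_nonneg (hφ i).le (hP i j)) (sq_nonneg _)
    exact mul_nonneg (by norm_num) (Finset.sum_nonneg this)
  exact ⟨hsymm, main, hpsd⟩
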